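/- In the counter BPA system Δ₀, for any process α with Var(α) ⊆ B: Z_i^b α ≃ α (branching bisimilar) if and only if Z_i^b α ≈ α (weakly bisimilar). -/

import Mathlib

/-- Silent-step closure (⇒): reflexive transitive closure of τ-transitions. -/
def SilentStar {S A : Type*} (trans : S → A → S → Prop) (tau : A) : S → S → Prop :=
  Relation.ReflTransGen (fun p q => trans p tau q)

/-- A symmetric relation is a branching bisimulation. -/
def IsBranchingBisim {S A : Type*} (trans : S → A → S → Prop) (tau : A)
    (R : S → S → Prop) : Prop :=
  Symmetric R ∧
  ∀ a b a' (l : A), R a b → trans a l a' →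
    (l = tau ∧ R a' b) ∨
    ∃ b'' b', SilentStar trans tau b b'' ∧ trans b'' l b' ∧ R a b'' ∧ R a' b'

/-- A symmetric relation is a weak bisimulation. -/
def IsWeakBisim {S A : Type*} (trans : S → A → S → Prop) (tau : A)
    (R : S → S → Prop) : Prop :=
  Symmetric R ∧
  ∀ a b a' (l : A), R a b → trans a l a' →
    (l = tau ∧ R a' b) ∨
    ∃ g1 g2 b', SilentStar trans tau b g1 ∧ trans g1 l g2 ∧
      SilentStar trans tau g2 b' ∧ R a' b'

/-- Branching bisimilarity: the union of all branching bisimulations. -/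
def BrBisim {S A : Type*} (trans : S → A → S → Prop) (tau : A) (a b : S) : Prop :=
  ∃ R, IsBranchingBisim trans tau R ∧ R a b

/-- Weak bisimilarity: the union of all weak bisimulations. -/
def WkBisim {S A : Type*} (trans : S → A → S → Prop) (tau : A) (a b : S) : Prop :=
  ∃ R, IsWeakBisim trans tau R ∧ R a b

/-- One-step transition of a BPA system: X β →λ α β whenever X →λ α is a rule. -/
def BPA.Trans {V A : Type*} (rules : V → A → List V → Prop)
    (p : List V) (l : A) (q : List V) : Prop :=
  ∃ X α β, p = X :: β ∧ rules X l α ∧ q = α ++ β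

/-- A step by some action. -/
def BPA.Step {V A : Type*} (rules : V → A → List V → Prop) (p q : List V) : Prop :=
  ∃ l, BPA.Trans rules p l q

/-- Reachability in a BPA system. -/
def BPA.Reach {V A : Type*} (rules : V → A → List V → Prop) : List V → List V → Prop :=
  Relation.ReflTransGen (BPA.Step rules)

/-- A BPA system is normed if every variable can reach the empty process ε. -/
def BPA.Normed {V A : Type*} (rules : V → A → List V → Prop) : Prop :=
  ∀ X : V, BPA.Reach rules [X] []

/-- The redundant set Rd(α) = { X | Xα ≃ α }. -/
def BPA.Rd {V A : Type*} (rules : V → A → List V → Prop) (tau : A) (α : List V) : Set V :=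
  {X | BrBisim (BPA.Trans rules) tau (X :: α) α}

/-- Variables of the counter system Δ₀. -/
inductive CVar (n : ℕ) : Type
  | B (i : Fin n) (b : Bool)
  | Z (i : Fin n) (b : Bool)
  | BP (i : Fin n) (b : Bool) (j : Fin n) (b' : Bool)
  deriving DecidableEq

/-- Actions of the counter system Δ₀. -/
inductive CAct (n : ℕ) : Type
  | tau
  | d
  | a (i : Fin n) (b : Bool)
  deriving DecidableEq

/-- The rules of the counter system Δ₀. -/
inductive CRule {n : ℕ} : CVar n → CAct n → List (CVar n) → Prop
  | z_a (i : Fin n) (b : Bool) : CRule (.Z i b) (.a i b) []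
  | z_tau (i : Fin n) (b : Bool) : CRule (.Z i b) .tau []
  | b_self (i : Fin n) (b : Bool) : CRule (.B i b) (.a i b) [.B i b]
  | b_d (i : Fin n) (b : Bool) : CRule (.B i b) .d []
  | b_obs (i : Fin n) (b : Bool) (j : Fin n) (b' : Bool) :
      j ≠ i → CRule (.B i b) (.a j b') [.BP i b j b']
  | bp_self (i : Fin n) (b : Bool) (j : Fin n) (b' : Bool) :
      j ≠ i → CRule (.BP i b j b') (.a i b) [.BP i b j b']
  | bp_d (i : Fin n) (b : Bool) (j : Fin n) (b' : Bool) :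
      j ≠ i → CRule (.BP i b j b') .d [.Z j b']
  | bp_obs (i : Fin n) (b : Bool) (j : Fin n) (b' : Bool) (j' : Fin n) (b'' : Bool) :
      j ≠ i → j' ≠ i → CRule (.BP i b j b') (.a j' b'') [.BP i b j' b'']

/-- Branching bisimilarity on processes of Δ₀. -/
def CBisim {n : ℕ} (p q : List (CVar n)) : Prop :=
  BrBisim (BPA.Trans (@CRule n)) CAct.tau p q

/-- Weak bisimilarity on processes of Δ₀. -/
def CWeak {n : ℕ} (p q : List (CVar n)) : Prop :=
  WkBisim (BPA.Trans (@CRule n)) CAct.tau p q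


section Aux

variable {n : ℕ}

/-- Branching bisimulation is a weak bisimulation. -/
lemma isWeak_of_isBranching {S A : Type*} {trans : S → A → S → Prop} {tau : A}
    {R : S → S → Prop} (h : IsBranchingBisim trans tau R) : IsWeakBisim trans tau R := by
  refine ⟨h.1, ?_⟩
  intro a b a' l hab ht
  rcases h.2 a b a' l hab ht with ⟨rfl, hr⟩ | ⟨b'', b', hs, ht', _, hr'⟩
  · exact Or.inl ⟨rfl, hr⟩
  · exact Or.inr ⟨b'', b', b', hs, ht', Relation.ReflTransGen.refl, hr'⟩

/-- Only Z variables have τ-transitions. -/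
lemma ctrans_tau_inv {p q : List (CVar n)}
    (h : BPA.Trans (@CRule n) p CAct.tau q) : ∃ j c, p = CVar.Z j c :: q := by
  obtain ⟨X, αr, β, hp, hr, hq⟩ := h
  cases hr with
  | z_tau j c =>
    subst hp; subst hq
    exact ⟨j, c, rfl⟩

/-- A process whose head is not a Z variable has no silent evolution. -/
lemma silent_headNotZ {p q : List (CVar n)}
    (hp : ∀ (j : Fin n) (c : Bool) (δ : List (CVar n)), p ≠ CVar.Z j c :: δ)
    (h : SilentStar (BPA.Trans (@CRule n)) CAct.tau p q) : q = p := by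
  rcases Relation.ReflTransGen.cases_head h with heq | ⟨r, hr, _⟩
  · exact heq.symm
  · obtain ⟨j, c, hpc⟩ := ctrans_tau_inv hr
    exact absurd hpc (hp j c r)

lemma silent_allB {p q : List (CVar n)}
    (hp : ∀ X ∈ p, ∃ j c, X = CVar.B j c)
    (h : SilentStar (BPA.Trans (@CRule n)) CAct.tau p q) : q = p := by
  apply silent_headNotZ (h := h)
  intro j c δ heq
  have hz : CVar.Z j c ∈ p := by rw [heq]; exact List.mem_cons_self
  obtain ⟨j', c', hB⟩ := hp _ hz
  cases hB

/-- The condition under which Z_i^b α is bisimilar to α: the first occurrence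
of index i in α carries bit b. -/
inductive Cgood (i : Fin n) (b : Bool) : List (CVar n) → Prop
  | head (δ : List (CVar n)) : Cgood i b (CVar.B i b :: δ)
  | cons (j : Fin n) (c : Bool) (δ : List (CVar n)) :
      j ≠ i → Cgood i b δ → Cgood i b (CVar.B j c :: δ)

/-- An explicit branching bisimulation witnessing Z_i^b α ≃ α for good α. -/
inductive CR (i : Fin n) (b : Bool) : List (CVar n) → List (CVar n) → Prop
  | refl (α) : CR i b α α
  | z (δ) : Cgood i b δ → CR i b (CVar.Z i b :: δ) δ
  | z' (δ) : Cgood i b δ → CR i b δ (CVar.Z i b :: δ)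
  | bp (j c δ) : j ≠ i → Cgood i b δ → CR i b (CVar.B j c :: δ) (CVar.BP j c i b :: δ)
  | bp' (j c δ) : j ≠ i → Cgood i b δ → CR i b (CVar.BP j c i b :: δ) (CVar.B j c :: δ)

lemma CR.symm (i : Fin n) (b : Bool) : Symmetric (CR i b) := by
  intro p q h
  cases h with
  | refl => exact CR.refl _
  | z δ hg => exact CR.z' _ hg
  | z' δ hg => exact CR.z _ hg
  | bp j c δ hj hg => exact CR.bp' _ _ _ hj hg
  | bp' j c δ hj hg => exact CR.bp _ _ _ hj hg

lemma CR.isBranching (i : Fin n) (b : Bool) :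
    IsBranchingBisim (BPA.Trans (@CRule n)) CAct.tau (CR i b) := by
  refine ⟨CR.symm i b, ?_⟩
  intro p q a' l hR ht
  cases hR with
  | refl =>
    exact Or.inr ⟨_, a', Relation.ReflTransGen.refl, ht, CR.refl _, CR.refl a'⟩
  | z δ0 hg =>
    obtain ⟨X, αr, β, hp, hr, hq⟩ := ht
    obtain ⟨h1, h2⟩ := List.cons_eq_cons.mp hp
    subst h1; subst h2; subst hq
    cases hr with
    | z_tau => exact Or.inl ⟨rfl, CR.refl _⟩
    | z_a =>
      refine Or.inr ?_
      cases hg with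
      | head δ' =>
        exact ⟨_, _, Relation.ReflTransGen.refl,
          ⟨CVar.B i b, [CVar.B i b], δ', rfl, CRule.b_self i b, rfl⟩,
          CR.z _ (Cgood.head δ'), CR.refl _⟩
      | cons j c δ' hj hg' =>
        exact ⟨_, _, Relation.ReflTransGen.refl,
          ⟨CVar.B j c, [CVar.BP j c i b], δ', rfl, CRule.b_obs j c i b (Ne.symm hj), rfl⟩,
          CR.z _ (Cgood.cons j c δ' hj hg'), CR.bp j c δ' hj hg'⟩
  | z' δ0 hg =>
    exact Or.inr ⟨_, a', Relation.ReflTransGen.single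
      ⟨CVar.Z i b, [], _, rfl, CRule.z_tau i b, rfl⟩, ht, CR.refl _, CR.refl a'⟩
  | bp j0 c0 δ0 hj hg =>
    obtain ⟨X, αr, β, hp, hr, hq⟩ := ht
    obtain ⟨h1, h2⟩ := List.cons_eq_cons.mp hp
    subst h1; subst h2; subst hq
    cases hr with
    | b_self =>
      exact Or.inr ⟨_, _, Relation.ReflTransGen.refl,
        ⟨_, [CVar.BP _ _ i b], _, rfl, CRule.bp_self _ _ i b (Ne.symm hj), rfl⟩,
        CR.bp _ _ _ hj hg, CR.bp _ _ _ hj hg⟩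
    | b_d =>
      exact Or.inr ⟨_, _, Relation.ReflTransGen.refl,
        ⟨_, [CVar.Z i b], _, rfl, CRule.bp_d _ _ i b (Ne.symm hj), rfl⟩,
        CR.bp _ _ _ hj hg, CR.z' _ hg⟩
    | b_obs =>
      rename_i hkj
      exact Or.inr ⟨_, _, Relation.ReflTransGen.refl,
        ⟨_, [CVar.BP _ _ _ _], _, rfl,
          CRule.bp_obs _ _ i b _ _ (Ne.symm hj) hkj, rfl⟩,
        CR.bp _ _ _ hj hg, CR.refl _⟩
  | bp' j0 c0 δ0 hj hg =>
    obtain ⟨X, αr, β, hp, hr, hq⟩ := ht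
    obtain ⟨h1, h2⟩ := List.cons_eq_cons.mp hp
    subst h1; subst h2; subst hq
    cases hr with
    | bp_self =>
      exact Or.inr ⟨_, _, Relation.ReflTransGen.refl,
        ⟨_, [CVar.B _ _], _, rfl, CRule.b_self _ _, rfl⟩,
        CR.bp' _ _ _ hj hg, CR.bp' _ _ _ hj hg⟩
    | bp_d =>
      exact Or.inr ⟨_, _, Relation.ReflTransGen.refl,
        ⟨_, [], _, rfl, CRule.b_d _ _, rfl⟩,
        CR.bp' _ _ _ hj hg, CR.z _ hg⟩
    | bp_obs =>
      rename_i hkj h1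
      exact Or.inr ⟨_, _, Relation.ReflTransGen.refl,
        ⟨_, [CVar.BP _ _ _ _], _, rfl, CRule.b_obs _ _ _ _ hkj, rfl⟩,
        CR.bp' _ _ _ hj hg, CR.refl _⟩

/-- Weak bisimilarity of Z_i^b α with α forces the good condition. -/
lemma weak_good (i : Fin n) (b : Bool) {R : List (CVar n) → List (CVar n) → Prop}
    (hR : IsWeakBisim (BPA.Trans (@CRule n)) CAct.tau R) :
    ∀ α : List (CVar n), (∀ X ∈ α, ∃ j c, X = CVar.B j c) →
      R (CVar.Z i b :: α) α → Cgood i b α := by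
  intro α
  induction α with
  | nil =>
    intro _ h
    have ht : BPA.Trans (@CRule n) (CVar.Z i b :: ([] : List (CVar n))) (CAct.a i b) [] :=
      ⟨CVar.Z i b, [], [], rfl, CRule.z_a i b, rfl⟩
    rcases hR.2 _ _ _ _ h ht with ⟨heq, _⟩ | ⟨g1, g2, b', hs1, ht2, _, _⟩
    · exact absurd heq (by simp)
    · have hg1 : g1 = [] := silent_headNotZ (by simp) hs1
      subst hg1
      obtain ⟨X, αr, β, hp, _, _⟩ := ht2
      exact absurd hp (by simp)
  | cons X γ ih =>
    intro hall h
    obtain ⟨j, c, rfl⟩ := hall X (List.mem_cons_self)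
    have hγ : ∀ Y ∈ γ, ∃ j' c', Y = CVar.B j' c' :=
      fun Y hY => hall Y (List.mem_cons_of_mem _ hY)
    have ht : BPA.Trans (@CRule n) (CVar.Z i b :: CVar.B j c :: γ) (CAct.a i b)
        (CVar.B j c :: γ) :=
      ⟨CVar.Z i b, [], CVar.B j c :: γ, rfl, CRule.z_a i b, rfl⟩
    rcases hR.2 _ _ _ _ h ht with ⟨heq, _⟩ | ⟨g1, g2, b', hs1, ht2, hs2, hb'⟩
    · exact absurd heq (by simp)
    · have hg1 : g1 = CVar.B j c :: γ := silent_allB hall hs1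
      subst hg1
      obtain ⟨X', αr, β, hp, hr, hq⟩ := ht2
      obtain ⟨h1, h2⟩ := List.cons_eq_cons.mp hp
      subst h1; subst h2; subst hq
      cases hr with
      | b_self => exact Cgood.head γ
      | b_obs =>
        rename_i hij
        -- g2 = BP j c i b :: γ, b' = g2
        have hb'eq : b' = CVar.BP j c i b :: γ := silent_headNotZ (by simp) hs2
        subst hb'eq
        -- R (B j c :: γ) (BP j c i b :: γ); use symmetry and the d-move of BP
        have hsymR := hR.1 hb'
        have htd : BPA.Trans (@CRule n) (CVar.BP j c i b :: γ) CAct.d (CVar.Z i b :: γ) :=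
          ⟨CVar.BP j c i b, [CVar.Z i b], γ, rfl, CRule.bp_d j c i b hij, rfl⟩
        rcases hR.2 _ _ _ _ hsymR htd with ⟨heq, _⟩ | ⟨g1', g2', b'', hs1', ht2', hs2', hb''⟩
        · exact absurd heq (by simp)
        · have hg1' : g1' = CVar.B j c :: γ := silent_allB hall hs1'
          subst hg1'
          obtain ⟨X'', αr', β', hp', hr', hq'⟩ := ht2'
          obtain ⟨h1', h2'⟩ := List.cons_eq_cons.mp hp'
          subst h1'; subst h2'; subst hq'
          cases hr' with
          | b_d =>
            have hb''eq : b'' = γ := silent_allB hγ hs2'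
            subst hb''eq
            exact Cgood.cons j c _ (Ne.symm hij) (ih hγ hb'')

end Aux

/-- Bit tests in the counter system Δ₀ coincide for branching and weak
bisimilarity: Z_i^b α ≃ α iff Z_i^b α ≈ α. -/
theorem counter_bit_test_weak {n : ℕ} (α : List (CVar n))
    (hα : ∀ X ∈ α, ∃ i b, X = CVar.B i b) (i : Fin n) (b : Bool) :
    CBisim (CVar.Z i b :: α) α ↔ CWeak (CVar.Z i b :: α) α := by
  constructor
  · rintro ⟨R, hR, hmem⟩
    exact ⟨R, isWeak_of_isBranching hR, hmem⟩
  · rintro ⟨R, hR, hmem⟩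
    exact ⟨CR i b, CR.isBranching i b, CR.z α (weak_good i b hR α hα hmem)⟩
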